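/- For all integers $m, n$ and positive integers $c$, the Kloosterman-type sum $K(m,n;c) := \sum_{d \bmod c,\ \gcd(d,c)=1} e^{\pi i s(d,c)} e\left(\frac{\bar{d}m + dn}{c}\right)$ is real, i.e., $\overline{K(m,n;c)} = K(m,n;c)$. Here $\bar{d}$ denotes the multiplicative inverse of $d$ modulo $c$, $e(\alpha) = e^{2\pi i \alpha}$, and $s(d,c)$ is the Dedekind sum. -/
import Mathlib


open Complex

/-- `e(α) = e^{2πiα}`. -/
noncomputable def eFn (α : ℂ) : ℂ := Complex.exp (2 * Real.pi * Complex.I * α)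

/-- The Dedekind sum `s(d, c)`. -/
noncomputable def dedekindSum (d c : ℤ) : ℝ :=
  ∑ r ∈ Finset.Ico 1 c.toNat,
    ((r : ℝ) / c - 1 / 2) *
      ((d * r : ℝ) / c - Int.floor ((d * r : ℝ) / c) - 1 / 2)

/-- The Kloosterman-type sum `K(m, n; c)` with the eta-multiplier twist
`e^{πi s(d,c)}`, summed over residues `d (mod c)` coprime to `c`, where
`d̄ = ((d : ZMod c)⁻¹).val` is the multiplicative inverse of `d` modulo `c`. -/
noncomputable def etaKloosterman (m n : ℤ) (c : ℕ) : ℂ :=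
  ∑ d ∈ (Finset.range c).filter (fun d => Nat.Coprime d c),
    Complex.exp (Real.pi * Complex.I * dedekindSum (d : ℤ) c) *
      eFn (((((d : ZMod c)⁻¹).val : ℤ) * m + (d : ℤ) * n : ℂ) / c)

private lemma dedekind_neg (c d : ℕ) (hd : Nat.Coprime d c) (hd1 : 1 ≤ d) (hdc : d < c) :
    dedekindSum ((c - d : ℕ) : ℤ) c = - dedekindSum (d : ℤ) c := by
  unfold dedekindSum
  rw [← Finset.sum_neg_distrib]
  refine Finset.sum_congr rfl (fun r hr => ?_)
  simp only [Finset.mem_Ico, Int.toNat_natCast] at hr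
  have hr1 : 1 ≤ r := hr.1
  have hrc : r < c := hr.2
  have hc0 : (0:ℝ) < (c:ℝ) := by exact_mod_cast (by omega : 0 < c)
  have key : ∀ (k : ℤ), Int.fract ((k:ℝ)/(c:ℝ)) = 0 → (c:ℤ) ∣ k := by
    intro k hk
    have h0 : ((k:ℝ)/(c:ℝ)) = (⌊(k:ℝ)/(c:ℝ)⌋ : ℝ) := by
      have := Int.self_sub_floor ((k:ℝ)/(c:ℝ))
      rw [hk] at this
      linarith
    refine ⟨⌊(k:ℝ)/(c:ℝ)⌋, ?_⟩
    have : (k:ℝ) = (c:ℝ) * ((⌊(k:ℝ)/(c:ℝ)⌋:ℤ) : ℝ) := by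
      field_simp at h0
      linarith
    exact_mod_cast this
  set x : ℝ := (((d:ℤ) * (r:ℤ) : ℤ) : ℝ) / (c:ℝ) with hx
  have hfrac : Int.fract x ≠ 0 := by
    intro h
    have hdvd : (c : ℤ) ∣ (d : ℤ) * (r : ℤ) := key _ h
    have hdvd' : c ∣ d * r := by exact_mod_cast hdvd
    have hdr : c ∣ r := (Nat.Coprime.symm hd).dvd_of_dvd_mul_left hdvd'
    exact absurd (Nat.le_of_dvd (by omega) hdr) (by omega)
  have hcd : (((c - d : ℕ) : ℤ) : ℝ) = (c : ℝ) - (d : ℝ) := by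
    push_cast [Nat.cast_sub hdc.le]; ring
  have h1 : ((((c - d : ℕ) : ℤ) * (r:ℤ) : ℤ) : ℝ) / (c:ℝ) = ((r:ℤ) : ℝ) + (-x) := by
    rw [hx]
    push_cast [Nat.cast_sub hdc.le]
    field_simp
    ring
  have h2 : Int.fract (((((c - d : ℕ) : ℤ) * (r:ℤ) : ℤ) : ℝ) / (c:ℝ)) = 1 - Int.fract x := by
    rw [h1, Int.fract_intCast_add, Int.fract_neg hfrac]
  have e2 : ∀ y : ℝ, y / (c:ℝ) - (⌊y / (c:ℝ)⌋ : ℝ) = Int.fract (y / (c:ℝ)) :=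
    fun y => Int.self_sub_floor _
  calc ((r : ℝ) / c - 1 / 2) *
      ((((c - d : ℕ) : ℤ) * r : ℝ) / c - Int.floor ((((c - d : ℕ) : ℤ) * r : ℝ) / c) - 1 / 2)
      = ((r : ℝ) / c - 1 / 2) * (Int.fract (((((c - d : ℕ) : ℤ) * (r:ℤ) : ℤ) : ℝ) / (c:ℝ)) - 1/2) := by
        rw [← Int.self_sub_floor]
        push_cast
        ring_nf
    _ = ((r : ℝ) / c - 1 / 2) * (1 - Int.fract x - 1/2) := by rw [h2]
    _ = -(((r : ℝ) / c - 1 / 2) * (Int.fract x - 1/2)) := by ring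
    _ = -(((r : ℝ) / c - 1 / 2) * (((d:ℤ) * r : ℝ) / c - Int.floor (((d:ℤ) * r : ℝ) / c) - 1 / 2)) := by
        rw [hx]
        rw [← Int.self_sub_floor]
        push_cast
        ring_nf

private lemma inv_neg_val (c : ℕ) (hc : 2 ≤ c) (d : ℕ) (hd : Nat.Coprime d c)
    (hdc : d < c) :
    ((((c - d : ℕ) : ZMod c)⁻¹).val : ℤ) + (((d : ZMod c)⁻¹).val : ℤ) = c := by
  haveI : NeZero c := ⟨by omega⟩
  haveI : Fact (1 < c) := ⟨by omega⟩
  have hcast : ((c - d : ℕ) : ZMod c) = -(d : ZMod c) := by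
    push_cast [Nat.cast_sub hdc.le]
    simp
  have hu : IsUnit ((d : ZMod c)) := (ZMod.isUnit_iff_coprime d c).2 hd
  have hmul : (d : ZMod c) * ((d : ZMod c))⁻¹ = 1 := ZMod.mul_inv_of_unit _ hu
  have hinv : (-(d : ZMod c))⁻¹ = -((d : ZMod c))⁻¹ := by
    apply ZMod.inv_eq_of_mul_eq_one
    rw [neg_mul_neg]; exact hmul
  rw [hcast, hinv]
  have hb0 : ((d : ZMod c))⁻¹ ≠ 0 := by
    intro h
    rw [h, mul_zero] at hmul
    exact zero_ne_one hmul
  rw [ZMod.neg_val]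
  simp only [hb0, if_false]
  have hlt := ZMod.val_lt ((d : ZMod c))⁻¹
  push_cast [Nat.cast_sub hlt.le]
  ring

/-- The Kloosterman-type sum `K(m,n;c)` is real: it equals its own
complex conjugate. -/
theorem etaKloosterman_real (m n : ℤ) (c : ℕ) (hc : 0 < c) :
    (starRingEnd ℂ) (etaKloosterman m n c) = etaKloosterman m n c := by
  rcases Nat.lt_or_ge c 2 with hc1 | hc2
  · have hcc : c = 1 := by omega
    subst hcc
    simp [etaKloosterman, dedekindSum, eFn, Subsingleton.elim ((0 : ZMod 1))⁻¹ 0]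
  · haveI : NeZero c := ⟨by omega⟩
    haveI : Fact (1 < c) := ⟨by omega⟩
    unfold etaKloosterman
    rw [map_sum]
    refine Finset.sum_nbij' (i := fun d => c - d) (j := fun d => c - d) ?_ ?_ ?_ ?_ ?_
    · intro a ha
      simp only [Finset.mem_filter, Finset.mem_range] at ha ⊢
      have ha1 : 1 ≤ a := by
        rcases Nat.eq_zero_or_pos a with h | h
        · exfalso; subst h
          have := ha.2
          simp [Nat.Coprime] at this
          omega
        · exact h
      refine ⟨by omega, ?_⟩
      rw [← ZMod.isUnit_iff_coprime]
      have : ((c - a : ℕ) : ZMod c) = -(a : ZMod c) := by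
        push_cast [Nat.cast_sub (le_of_lt ha.1)]
        simp
      rw [this]
      exact (IsUnit.neg ((ZMod.isUnit_iff_coprime a c).2 ha.2))
    · intro a ha
      simp only [Finset.mem_filter, Finset.mem_range] at ha ⊢
      have ha1 : 1 ≤ a := by
        rcases Nat.eq_zero_or_pos a with h | h
        · exfalso; subst h
          have := ha.2
          simp [Nat.Coprime] at this
          omega
        · exact h
      refine ⟨by omega, ?_⟩
      rw [← ZMod.isUnit_iff_coprime]
      have : ((c - a : ℕ) : ZMod c) = -(a : ZMod c) := by
        push_cast [Nat.cast_sub (le_of_lt ha.1)]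
        simp
      rw [this]
      exact (IsUnit.neg ((ZMod.isUnit_iff_coprime a c).2 ha.2))
    · intro a ha
      simp only [Finset.mem_filter, Finset.mem_range] at ha
      show c - (c - a) = a
      omega
    · intro a ha
      simp only [Finset.mem_filter, Finset.mem_range] at ha
      show c - (c - a) = a
      omega
    · intro d hd
      simp only [Finset.mem_filter, Finset.mem_range] at hd
      have hd1 : 1 ≤ d := by
        rcases Nat.eq_zero_or_pos d with h | h
        · exfalso; subst h
          have := hd.2
          simp [Nat.Coprime] at this
          omega
        · exact h
      have hs := dedekind_neg c d hd.2 hd1 hd.1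
      have hval := inv_neg_val c hc2 d hd.2 hd.1
      have hc0 : (c : ℂ) ≠ 0 := by exact_mod_cast (by omega : c ≠ 0)
      have hA : (((((c - d : ℕ) : ZMod c)⁻¹).val : ℤ) : ℂ)
          = (c : ℂ) - ((((d : ZMod c)⁻¹).val : ℤ) : ℂ) := by
        have : ((((c - d : ℕ) : ZMod c)⁻¹).val : ℤ) = (c : ℤ) - (((d : ZMod c)⁻¹).val : ℤ) := by
          omega
        exact_mod_cast this
      have hcd : (((c - d : ℕ) : ℤ) : ℂ) = (c : ℂ) - (d : ℂ) := by
        push_cast [Nat.cast_sub hd.1.le]; ring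
      simp only [eFn, map_mul, ← Complex.exp_conj, map_div₀, map_add, map_mul,
        map_intCast, map_natCast, map_ofNat, Complex.conj_I, Complex.conj_ofReal]
      rw [← Complex.exp_add, ← Complex.exp_add, hs, hA, hcd]
      rw [Complex.exp_eq_exp_iff_exists_int]
      refine ⟨-(m + n), ?_⟩
      push_cast
      field_simp
      ring
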